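/- Let S be a finite set of r points in the complex projective plane P^2 satisfying the Cayley–Bacharach condition CB(m). If r ≤ (5/2)·m + 1, then S is contained in a plane curve C ⊂ P^2 of degree at most 2 (a line, a smooth conic, or a union of two lines). -/

import Mathlib

open MvPolynomial

noncomputable section

/-- Points of the complex projective space whose homogeneous coordinates are
indexed by `ι` (so for `ι = Fin (N+1)` this is `ℙ^N`). -/
abbrev PPt (ι : Type) : Type := Projectivization ℂ (ι → ℂ)

/-- A polynomial vanishes at a projective point if it vanishes at every
representative vector of the point. -/
def PVanish {ι : Type} (f : MvPolynomial ι ℂ) (x : PPt ι) : Prop :=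
  ∀ (v : ι → ℂ) (hv : v ≠ 0), Projectivization.mk ℂ v hv = x → eval v f = 0

/-- The zero locus of a polynomial in projective space. -/
def ZeroSet {ι : Type} (f : MvPolynomial ι ℂ) : Set (PPt ι) :=
  {x | PVanish f x}

/-- Zariski-closed subsets of projective space: common zero loci of families of
homogeneous polynomials. -/
def IsZClosed {ι : Type} (Y : Set (PPt ι)) : Prop :=
  ∃ fs : Set (MvPolynomial ι ℂ),
    (∀ f ∈ fs, ∃ e, f.IsHomogeneous e) ∧ Y = {x | ∀ f ∈ fs, PVanish f x}

/-- `U` contains a dense (Zariski-)open subset of `X`: there is a Zariski-closed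
set `Y` not containing `X` with `X \ Y ⊆ U`.  Taking `X = Set.univ` this is the
notion of a set containing "the general point" of the ambient projective space. -/
def ContainsDenseOpenOf {ι : Type} (X U : Set (PPt ι)) : Prop :=
  ∃ Y : Set (PPt ι), IsZClosed Y ∧ ¬ X ⊆ Y ∧ X \ Y ⊆ U

/-- The set of projective points lying in (the projectivization of) a linear
subspace `W`. -/
def LinSet {ι : Type} (W : Submodule ℂ (ι → ℂ)) : Set (PPt ι) :=
  {x | x.submodule ≤ W}

/-- A line in projective space: the projectivization of a 2-dimensional
linear subspace. -/
def IsLine {ι : Type} (L : Set (PPt ι)) : Prop :=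
  ∃ W : Submodule ℂ (ι → ℂ), Module.finrank ℂ W = 2 ∧ L = LinSet W

/-- A smooth plane conic with supporting plane `P(W)`: the zero locus, inside the
projective plane `P(W)`, of a quadric which does not vanish identically on `W`
and whose restriction to `W` has no singular points. -/
def IsConicIn {ι : Type} [Fintype ι] (W : Submodule ℂ (ι → ℂ))
    (C : Set (PPt ι)) : Prop :=
  Module.finrank ℂ W = 3 ∧
  ∃ f : MvPolynomial ι ℂ, f.IsHomogeneous 2 ∧
    C = {x | x.submodule ≤ W ∧ PVanish f x} ∧
    (∃ v ∈ W, eval v f ≠ 0) ∧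
    (∀ v ∈ W, v ≠ 0 → eval v f = 0 →
      ∃ w ∈ W, (∑ i, eval v (pderiv i f) * w i) ≠ 0)

/-- A smooth plane conic in projective space. -/
def IsSmoothConic {ι : Type} [Fintype ι] (C : Set (PPt ι)) : Prop :=
  ∃ W, IsConicIn W C

/-- The Cayley–Bacharach condition `CB(m)`: every degree-`m` hypersurface
containing all points of `S` but one contains all of `S`. -/
def SatisfiesCB {ι : Type} (m : ℕ) (S : Finset (PPt ι)) : Prop :=
  ∀ f : MvPolynomial ι ℂ, f.IsHomogeneous m →
    ∀ p ∈ S, (∀ q ∈ S, q ≠ p → PVanish f q) → PVanish f p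

/-- A smooth projective hypersurface of degree `e`: the partial derivatives of
its (homogeneous) equation have no common nontrivial zero. -/
def IsSmoothHyp {ι : Type} [Fintype ι] (f : MvPolynomial ι ℂ) (e : ℕ) : Prop :=
  f.IsHomogeneous e ∧ f ≠ 0 ∧
    ∀ v : ι → ℂ, v ≠ 0 → ¬ (∀ i, eval v (pderiv i f) = 0)

/-- `{f = g = 0}` is a smooth complete intersection: at every common nontrivial
zero the two gradients are linearly independent. -/
def IsSmoothCI2 {ι : Type} [Fintype ι] (f g : MvPolynomial ι ℂ) : Prop :=
  ∀ v : ι → ℂ, v ≠ 0 → eval v f = 0 → eval v g = 0 →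
    ∀ a b : ℂ, (∀ i, a * eval v (pderiv i f) + b * eval v (pderiv i g) = 0) →
      a = 0 ∧ b = 0

/-- `{f = g = h = 0}` is a smooth complete intersection: at every common
nontrivial zero the three gradients are linearly independent. -/
def IsSmoothCI3 {ι : Type} [Fintype ι] (f g h : MvPolynomial ι ℂ) : Prop :=
  ∀ v : ι → ℂ, v ≠ 0 → eval v f = 0 → eval v g = 0 → eval v h = 0 →
    ∀ a b c : ℂ,
      (∀ i, a * eval v (pderiv i f) + b * eval v (pderiv i g)
        + c * eval v (pderiv i h) = 0) →
      a = 0 ∧ b = 0 ∧ c = 0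

/-- A rational map from (a subvariety of) the projective space with coordinates
`ι` to `ℙ^n`, given by an `(n+1)`-tuple of homogeneous polynomials of a common
degree `e`. -/
structure RatMapTo (ι : Type) (n : ℕ) where
  F : Fin (n + 1) → MvPolynomial ι ℂ
  e : ℕ
  homog : ∀ j, (F j).IsHomogeneous e

namespace RatMapTo

variable {ι : Type} {n : ℕ}

def evalVec (φ : RatMapTo ι n) (v : ι → ℂ) : Fin (n + 1) → ℂ :=
  fun j => eval v (φ.F j)

/-- `φ` is defined at `x` and sends `x` to `y`. -/
def mapsTo (φ : RatMapTo ι n) (x : PPt ι) (y : PPt (Fin (n + 1))) : Prop :=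
  ∀ (v : ι → ℂ) (hv : v ≠ 0), Projectivization.mk ℂ v hv = x →
    ∃ hw : φ.evalVec v ≠ 0, Projectivization.mk ℂ (φ.evalVec v) hw = y

/-- The fiber over `y` of the restriction of `φ` to `X`. -/
def fiber (φ : RatMapTo ι n) (X : Set (PPt ι)) (y : PPt (Fin (n + 1))) :
    Set (PPt ι) :=
  {x ∈ X | φ.mapsTo x y}

/-- The restriction of `φ` to `X` is a dominant rational map of degree `δ`:
the fiber over a general point of `ℙ^n` consists of exactly `δ` points. -/
def DominantOfDegree (φ : RatMapTo ι n) (X : Set (PPt ι)) (δ : ℕ) : Prop :=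
  0 < δ ∧
  ∃ V : Set (PPt (Fin (n + 1))), ContainsDenseOpenOf Set.univ V ∧
    ∀ y ∈ V, (φ.fiber X y).Finite ∧ (φ.fiber X y).ncard = δ

end RatMapTo

/-- The degree of irrationality of `X`: the minimal degree of a dominant
rational map `X ⇢ ℙ^n`. -/
def irr {ι : Type} (n : ℕ) (X : Set (PPt ι)) : ℕ :=
  sInf {δ : ℕ | ∃ φ : RatMapTo ι n, φ.DominantOfDegree X δ}

/-- `ψ` is the linear projection away from the linear subspace `P(W)`:
it is given by linear forms whose common kernel is exactly `W`. -/
def IsLinearProjectionFrom {ι : Type} {n : ℕ} (ψ : RatMapTo ι n)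
    (W : Submodule ℂ (ι → ℂ)) : Prop :=
  ψ.e = 1 ∧ ∀ v : ι → ℂ, ψ.evalVec v = 0 ↔ v ∈ W

/-- The rational maps `φ` and `ψ` on `X` are birationally equivalent: they
differ by composition with a birational automorphism `τ` of the target `ℙ^n`. -/
def BirEquivTo {ι : Type} {n : ℕ} (X : Set (PPt ι)) (φ ψ : RatMapTo ι n) : Prop :=
  ∃ τ : RatMapTo (Fin (n + 1)) n, τ.DominantOfDegree Set.univ 1 ∧
    ∃ U : Set (PPt ι), ContainsDenseOpenOf X U ∧
      ∀ x ∈ U, ∃ y z, φ.mapsTo x y ∧ ψ.mapsTo x z ∧ τ.mapsTo z y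

/-- `A` is contained in a proper Zariski-closed subset of the (projective) space
of degree-`d` forms: it is cut out by a polynomial in the coefficients which is
not identically zero on degree-`d` forms. -/
def CoeffPolyProperClosed {ι : Type} (d : ℕ) (A : Set (MvPolynomial ι ℂ)) : Prop :=
  ∃ (κ : ℕ) (mons : Fin κ → (ι →₀ ℕ)) (Q : MvPolynomial (Fin κ) ℂ),
    (∀ g ∈ A, eval (fun j => coeff (mons j) g) Q = 0) ∧
    (∃ g : MvPolynomial ι ℂ, g.IsHomogeneous d ∧
      eval (fun j => coeff (mons j) g) Q ≠ 0)

end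

noncomputable section

namespace CB
attribute [local instance] Classical.propDecidable

abbrev V3 := Fin 3 → ℂ
abbrev P2 := PPt (Fin 3)
abbrev MP := MvPolynomial (Fin 3) ℂ

lemma sum_exponents {f : MP} {n : ℕ} (hf : f.IsHomogeneous n)
    {d : Fin 3 →₀ ℕ} (hd : coeff d f ≠ 0) : ∑ i, d i = n := by
  have h := hf hd
  rw [← h, show (Finsupp.weight 1 : (Fin 3 →₀ ℕ) →+ ℕ) = Finsupp.weight (fun _ => 1) from rfl,
    ← Finsupp.degree_eq_weight_one]
  show _ = ∑ i ∈ d.support, d i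
  refine (Finset.sum_subset (Finset.subset_univ _) ?_).symm
  intro i _ hi
  simp [Finsupp.notMem_support_iff.mp hi]

lemma eval_smul_hom {f : MP} {n : ℕ} (hf : f.IsHomogeneous n) (c : ℂ) (v : V3) :
    eval (c • v) f = c ^ n * eval v f := by
  rw [eval_eq', eval_eq', Finset.mul_sum]
  refine Finset.sum_congr rfl fun d hd => ?_
  have hsum : ∑ i, d i = n := sum_exponents hf (mem_support_iff.mp hd)
  simp only [Pi.smul_apply, smul_eq_mul, mul_pow]
  rw [Finset.prod_mul_distrib, Finset.prod_pow_eq_pow_sum, hsum]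
  ring

/-- For homogeneous `f`, vanishing at one representative suffices. -/
lemma pvanish_iff {f : MP} {n : ℕ} (hf : f.IsHomogeneous n) (x : P2) :
    PVanish f x ↔ eval x.rep f = 0 := by
  constructor
  · intro h; exact h x.rep x.rep_nonzero x.mk_rep
  · intro h v hv hmk
    obtain ⟨a, ha⟩ := (Projectivization.mk_eq_mk_iff ℂ _ _ hv x.rep_nonzero).mp
      (by rw [hmk, Projectivization.mk_rep])
    rw [← ha, Units.smul_def, eval_smul_hom hf, h, mul_zero]

lemma pvanish_mul_left {f g : MP} {x : P2} (h : PVanish f x) : PVanish (f * g) x := by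
  intro v hv hmk; rw [map_mul, h v hv hmk, zero_mul]

lemma pvanish_mul_right {f g : MP} {x : P2} (h : PVanish g x) : PVanish (f * g) x := by
  intro v hv hmk; rw [map_mul, h v hv hmk, mul_zero]

lemma not_pvanish_of_rep {f : MP} {x : P2} (h : eval x.rep f ≠ 0) : ¬ PVanish f x :=
  fun hp => h (hp x.rep x.rep_nonzero x.mk_rep)

/-- linear form attached to a covector -/
def lin (w : V3) : MP := ∑ i, C (w i) * X i

lemma lin_isHom (w : V3) : (lin w).IsHomogeneous 1 :=
  IsHomogeneous.sum _ _ _ fun i _ => isHomogeneous_C_mul_X (w i) i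

lemma eval_lin (w v : V3) : eval v (lin w) = ∑ i, w i * v i := by
  simp [lin]


/-- Separating covector: if `v ∉ U` there is a covector vanishing on `U` but not at `v`. -/
lemma exists_covector {U : Submodule ℂ V3} {v : V3} (hv : v ∉ U) :
    ∃ w : V3, (∀ u ∈ U, ∑ i, w i * u i = 0) ∧ ∑ i, w i * v i ≠ 0 := by
  have hq : U.mkQ v ≠ 0 := by
    simpa [Submodule.mkQ_apply, Submodule.Quotient.mk_eq_zero] using hv
  have : ¬ ∀ ψ : Module.Dual ℂ (V3 ⧸ U), ψ (U.mkQ v) = 0 := by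
    rw [Module.forall_dual_apply_eq_zero_iff]; exact hq
  push_neg at this
  obtain ⟨ψ, hψ⟩ := this
  set φ : V3 →ₗ[ℂ] ℂ := ψ.comp U.mkQ with hφ
  have key : ∀ u : V3, φ u = ∑ i, (fun i => φ (Pi.single i (1:ℂ))) i * u i := by
    intro u
    conv_lhs => rw [show u = ∑ i, u i • (Pi.single i 1 : V3) by
      simp [← Pi.single_smul, Finset.univ_sum_single]]
    rw [map_sum]
    refine Finset.sum_congr rfl fun i _ => ?_
    rw [map_smul]; simp [mul_comm]
  refine ⟨fun i => φ (Pi.single i (1:ℂ)), fun u hu => ?_, ?_⟩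
  · rw [← key]; simp [hφ, Submodule.mkQ_apply, (Submodule.Quotient.mk_eq_zero _).2 hu]
  · rw [← key]; exact hψ

lemma rep_not_mem_span {p q : P2} (h : q ≠ p) : p.rep ∉ (ℂ ∙ q.rep) := by
  intro hmem
  rw [Submodule.mem_span_singleton] at hmem
  obtain ⟨a, ha⟩ := hmem
  have ha0 : a ≠ 0 := by rintro rfl; exact p.rep_nonzero (by simpa using ha.symm)
  apply h
  have := (Projectivization.mk_eq_mk_iff ℂ p.rep q.rep p.rep_nonzero q.rep_nonzero).2
    ⟨Units.mk0 a ha0, ha⟩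
  rw [Projectivization.mk_rep, Projectivization.mk_rep] at this
  exact this.symm

/-- A line through `q` missing `p`. -/
lemma exists_line_single {p q : P2} (h : q ≠ p) :
    ∃ g : MP, g.IsHomogeneous 1 ∧ PVanish g q ∧ eval p.rep g ≠ 0 := by
  obtain ⟨w, hw0, hw1⟩ := exists_covector (rep_not_mem_span h)
  refine ⟨lin w, lin_isHom w, ?_, ?_⟩
  · rw [pvanish_iff (lin_isHom w), eval_lin]
    exact hw0 q.rep (Submodule.mem_span_singleton_self _)
  · rw [eval_lin]; exact hw1

/-- A line through `q₁, q₂` missing `p`, provided `p` is not on the projective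
line spanned by them. -/
lemma exists_line_pair {p q₁ q₂ : P2}
    (h : p.rep ∉ Submodule.span ℂ {q₁.rep, q₂.rep}) :
    ∃ g : MP, g.IsHomogeneous 1 ∧ PVanish g q₁ ∧ PVanish g q₂ ∧ eval p.rep g ≠ 0 := by
  obtain ⟨w, hw0, hw1⟩ := exists_covector h
  refine ⟨lin w, lin_isHom w, ?_, ?_, ?_⟩
  · rw [pvanish_iff (lin_isHom w), eval_lin]
    exact hw0 q₁.rep (Submodule.subset_span (by simp))
  · rw [pvanish_iff (lin_isHom w), eval_lin]
    exact hw0 q₂.rep (Submodule.subset_span (by simp))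
  · rw [eval_lin]; exact hw1

/-- A linear form not vanishing at `p`. -/
lemma exists_lin_nonzero (p : P2) :
    ∃ g : MP, g.IsHomogeneous 1 ∧ eval p.rep g ≠ 0 := by
  obtain ⟨w, _, hw1⟩ := exists_covector (by simp [p.rep_nonzero] :
    p.rep ∉ (⊥ : Submodule ℂ V3))
  exact ⟨lin w, lin_isHom w, by rw [eval_lin]; exact hw1⟩

lemma cb_contra {m : ℕ} {S : Finset P2} (hCB : SatisfiesCB m S) {p : P2} (hp : p ∈ S)
    {f : MP} (hf : f.IsHomogeneous m) (hvan : ∀ q ∈ S, q ≠ p → PVanish f q)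
    (hnp : eval p.rep f ≠ 0) : False :=
  not_pvanish_of_rep hnp (hCB f hf p hp hvan)

/-- Residuation: removing the points on a degree-`k` hypersurface from a `CB(m)`
set leaves a `CB(m-k)` set. -/
lemma residuation {m k : ℕ} {S : Finset P2} (hCB : SatisfiesCB m S)
    {g : MP} (hg : g.IsHomogeneous k) (hk : k ≤ m) :
    SatisfiesCB (m - k) (S.filter (fun x => ¬ PVanish g x)) := by
  intro f hf p hp hvan
  rw [Finset.mem_filter] at hp
  have hfg : (f * g).IsHomogeneous m := by
    have := hf.mul hg
    rwa [Nat.sub_add_cancel hk] at this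
  have hmain : PVanish (f * g) p := by
    refine hCB (f * g) hfg p hp.1 fun q hq hqp => ?_
    by_cases hgq : PVanish g q
    · exact pvanish_mul_right hgq
    · exact pvanish_mul_left (hvan q (Finset.mem_filter.2 ⟨hq, hgq⟩) hqp)
  rw [pvanish_iff hf]
  have h1 : eval p.rep (f * g) = 0 := hmain p.rep p.rep_nonzero p.mk_rep
  rw [map_mul] at h1
  have h2 : eval p.rep g ≠ 0 := by
    intro h0; exact hp.2 ((pvanish_iff hg p).2 h0)
  exact (mul_eq_zero.1 h1).resolve_right h2

/-- Covering a finset of points (each separable from `p` by a line) with a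
product of linear forms, of any degree `k ≥ card`. -/
lemma cover_by_lines {p : P2} {T : Finset P2} (hT : ∀ q ∈ T, q ≠ p) {k : ℕ}
    (hk : T.card ≤ k) :
    ∃ f : MP, f.IsHomogeneous k ∧ (∀ q ∈ T, PVanish f q) ∧ eval p.rep f ≠ 0 := by
  have hsep : ∀ q ∈ T, ∃ g : MP, g.IsHomogeneous 1 ∧ PVanish g q ∧ eval p.rep g ≠ 0 :=
    fun q hq => exists_line_single (hT q hq)
  choose! g hhom hvan hnz using hsep
  obtain ⟨g₀, hg₀hom, hg₀nz⟩ := exists_lin_nonzero p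
  refine ⟨(∏ q ∈ T, g q) * g₀ ^ (k - T.card), ?_, ?_, ?_⟩
  · have h1 : (∏ q ∈ T, g q).IsHomogeneous T.card := by
      have := IsHomogeneous.prod T g (fun _ => 1) (fun q hq => hhom q hq)
      simpa using this
    have := h1.mul (hg₀hom.pow (k - T.card))
    rwa [one_mul, Nat.add_sub_cancel' hk] at this
  · intro q hq
    apply pvanish_mul_left
    intro v hv hmk
    rw [map_prod]
    exact Finset.prod_eq_zero hq (hvan q hq v hv hmk)
  · rw [map_mul, map_prod, map_pow]
    exact mul_ne_zero (Finset.prod_ne_zero_iff.2 fun q hq => hnz q hq)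
      (pow_ne_zero _ hg₀nz)

/-- Any nonempty set satisfying `CB(k)` has at least `k+2` points. -/
lemma card_lower {k : ℕ} {T : Finset P2} (hCB : SatisfiesCB k T) (hne : T.Nonempty) :
    k + 2 ≤ T.card := by
  by_contra hlt
  push_neg at hlt
  obtain ⟨p, hp⟩ := hne
  have hcard : (T.erase p).card ≤ k := by
    have := Finset.card_erase_of_mem hp
    omega
  obtain ⟨f, hfhom, hfvan, hfnz⟩ := cover_by_lines
    (fun q hq => Finset.ne_of_mem_erase hq) hcard
  exact cb_contra hCB hp hfhom
    (fun q hq hqp => hfvan q (Finset.mem_erase.2 ⟨hqp, hq⟩)) hfnz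


/-- Cover `T` by `⌈|T|/2⌉` lines avoiding `p`, given that any two points of `T`
can be joined by a line missing `p`. -/
lemma cover_by_pair_lines {p : P2} (T : Finset P2) (hT : ∀ q ∈ T, q ≠ p)
    (hpair : ∀ q₁ ∈ T, ∀ q₂ ∈ T, q₁ ≠ q₂ →
      ∃ g : MP, g.IsHomogeneous 1 ∧ PVanish g q₁ ∧ PVanish g q₂ ∧ eval p.rep g ≠ 0) :
    ∃ f : MP, f.IsHomogeneous ((T.card + 1) / 2) ∧ (∀ q ∈ T, PVanish f q) ∧
      eval p.rep f ≠ 0 := by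
  generalize hn : T.card = n
  induction n using Nat.strong_induction_on generalizing T with
  | _ n ih =>
  rcases Nat.lt_or_ge n 2 with h2 | h2
  · rcases Nat.lt_or_ge n 1 with h1 | h1
    · -- empty
      refine ⟨C 1, by simpa [show (n+1)/2 = 0 by omega] using isHomogeneous_C (σ := Fin 3) (1:ℂ), ?_, by simp⟩
      intro q hq
      exact absurd (hn ▸ Finset.card_pos.2 ⟨q, hq⟩) (by omega)
    · -- a single point
      have hcard : T.card = 1 := by omega
      obtain ⟨q, hq⟩ := Finset.card_eq_one.1 hcard
      obtain ⟨g, hg1, hgv, hgnz⟩ := exists_line_single (hT q (hq ▸ Finset.mem_singleton_self q))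
      refine ⟨g, by simpa [show (n+1)/2 = 1 by omega] using hg1, ?_, hgnz⟩
      intro x hx
      rw [hq, Finset.mem_singleton] at hx
      rwa [hx]
  · obtain ⟨q₁, hq₁, q₂, hq₂, hne⟩ := Finset.one_lt_card.1 (by omega : 1 < T.card)
    obtain ⟨g, hg1, hgv₁, hgv₂, hgnz⟩ := hpair q₁ hq₁ q₂ hq₂ hne
    set T' := (T.erase q₁).erase q₂ with hT'
    have hsub : T' ⊆ T := (Finset.erase_subset _ _).trans (Finset.erase_subset _ _)
    have hcard' : T'.card = n - 2 := by
      rw [hT', Finset.card_erase_of_mem (Finset.mem_erase.2 ⟨hne.symm, hq₂⟩),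
        Finset.card_erase_of_mem hq₁, hn]
      omega
    obtain ⟨f', hf'hom, hf'v, hf'nz⟩ := ih (n - 2) (by omega) T'
      (fun q hq => hT q (hsub hq))
      (fun a ha b hb hab => hpair a (hsub ha) b (hsub hb) hab) hcard'
    refine ⟨g * f', ?_, ?_, ?_⟩
    · have := hg1.mul hf'hom
      rwa [show 1 + (n - 2 + 1) / 2 = (n + 1) / 2 by omega] at this
    · intro q hq
      by_cases hq1 : q = q₁
      · exact pvanish_mul_left (hq1 ▸ hgv₁)
      by_cases hq2 : q = q₂
      · exact pvanish_mul_left (hq2 ▸ hgv₂)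
      · exact pvanish_mul_right (hf'v q (Finset.mem_erase.2 ⟨hq2, Finset.mem_erase.2 ⟨hq1, hq⟩⟩))
    · rw [map_mul]; exact mul_ne_zero hgnz hf'nz

def mons : Fin 6 → MP :=
  ![X 0 * X 0, X 0 * X 1, X 0 * X 2, X 1 * X 1, X 1 * X 2, X 2 * X 2]

@[simp] lemma mons0 : mons 0 = X 0 * X 0 := rfl
@[simp] lemma mons1 : mons 1 = X 0 * X 1 := rfl
@[simp] lemma mons2 : mons 2 = X 0 * X 2 := rfl
@[simp] lemma mons3 : mons 3 = X 1 * X 1 := rfl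
@[simp] lemma mons4 : mons 4 = X 1 * X 2 := rfl
@[simp] lemma mons5 : mons 5 = X 2 * X 2 := rfl

lemma mons_isHom (j : Fin 6) : (mons j).IsHomogeneous 2 := by
  fin_cases j <;>
    exact (isHomogeneous_X ℂ _).mul (isHomogeneous_X ℂ _)

def quadOf (c : Fin 6 → ℂ) : MP := ∑ j, C (c j) * mons j

lemma quadOf_isHom (c : Fin 6 → ℂ) : (quadOf c).IsHomogeneous 2 :=
  IsHomogeneous.sum _ _ _ fun j _ => (mons_isHom j).C_mul (c j)

lemma eval_quadOf (c : Fin 6 → ℂ) (v : V3) :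
    eval v (quadOf c) = ∑ j, c j * eval v (mons j) := by
  simp [quadOf]

lemma quadOf_ne_zero {c : Fin 6 → ℂ} (hc : c ≠ 0) : quadOf c ≠ 0 := by
  intro h0
  apply hc
  have hev : ∀ v : V3, ∑ j, c j * eval v (mons j) = 0 := by
    intro v; rw [← eval_quadOf, h0, map_zero]
  have e0 := hev ![1,0,0]
  have e1 := hev ![0,1,0]
  have e2 := hev ![0,0,1]
  have e3 := hev ![1,1,0]
  have e4 := hev ![1,0,1]
  have e5 := hev ![0,1,1]
  simp [Fin.sum_univ_six] at e0 e1 e2 e3 e4 e5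
  funext j
  fin_cases j
  · exact (by linear_combination e0 : c 0 = 0)
  · exact (by linear_combination e3 - e0 - e1 : c 1 = 0)
  · exact (by linear_combination e4 - e0 - e2 : c 2 = 0)
  · exact (by linear_combination e1 : c 3 = 0)
  · exact (by linear_combination e5 - e1 - e2 : c 4 = 0)
  · exact (by linear_combination e2 : c 5 = 0)

/-- Through any ≤ 5 points there is a nonzero conic. -/
lemma exists_conic (T : Finset P2) (hT : T.card ≤ 5) :
    ∃ q : MP, q.IsHomogeneous 2 ∧ q ≠ 0 ∧ ∀ x ∈ T, PVanish q x := by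
  let Φ : (Fin 6 → ℂ) →ₗ[ℂ] ({x // x ∈ T} → ℂ) :=
    { toFun := fun c x => ∑ j, c j * eval (x.1.rep) (mons j)
      map_add' := by
        intro a b; funext x; simp [add_mul, Finset.sum_add_distrib]
      map_smul' := by
        intro r a; funext x; simp [Finset.mul_sum, mul_assoc] }
  have hnotinj : ¬ Function.Injective Φ := by
    intro hinj
    have h1 := LinearMap.finrank_le_finrank_of_injective hinj
    have h2 : Module.finrank ℂ (Fin 6 → ℂ) = 6 := by
      simp [Module.finrank_pi]
    have h3 : Module.finrank ℂ ({x // x ∈ T} → ℂ) = T.card := by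
      simp [Module.finrank_pi]
    omega
  rw [← LinearMap.ker_eq_bot] at hnotinj
  obtain ⟨c, hcmem, hc0⟩ := Submodule.exists_mem_ne_zero_of_ne_bot hnotinj
  refine ⟨quadOf c, quadOf_isHom c, quadOf_ne_zero hc0, ?_⟩
  intro x hx
  rw [pvanish_iff (quadOf_isHom c), eval_quadOf]
  have := congrFun (LinearMap.mem_ker.1 hcmem) ⟨x, hx⟩
  exact this


lemma degree_univ_sum (d : Fin 3 →₀ ℕ) : d.degree = ∑ i, d i := by
  show ∑ i ∈ d.support, d i = _
  refine Finset.sum_subset (Finset.subset_univ _) ?_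
  intro i _ hi
  simp [Finsupp.notMem_support_iff.mp hi]

lemma euler_monomial (d : Fin 3 →₀ ℕ) (a : ℂ) :
    ∑ i, X i * pderiv i (monomial d a) = (∑ i, d i) • monomial d a := by
  have h : ∀ i : Fin 3, X i * pderiv i (monomial d a) = monomial d (a * d i) := by
    intro i
    rw [pderiv_monomial]
    by_cases hdi : d i = 0
    · simp [hdi]
    · have hd' : Finsupp.single i 1 + (d - Finsupp.single i 1) = d := by
        ext j
        rcases eq_or_ne j i with rfl | hji
        · simp only [Finsupp.add_apply, Finsupp.tsub_apply, Finsupp.single_eq_same]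
          omega
        · simp [Finsupp.single_apply, (Ne.symm hji : i ≠ j), Finsupp.tsub_apply]
      rw [show (X i : MP) = monomial (Finsupp.single i 1) 1 from rfl,
        monomial_mul, hd', one_mul]
  rw [Finset.sum_congr rfl (fun i _ => h i), ← map_sum, ← Finset.mul_sum, smul_monomial]
  congr 1
  rw [nsmul_eq_mul, Nat.cast_sum]
  ring

lemma euler {n : ℕ} {f : MP} (hf : f.IsHomogeneous n) :
    ∑ i, X i * pderiv i f = n • f := by
  conv_lhs => rw [f.as_sum]
  have hstep : ∀ i : Fin 3,
      X i * pderiv i (∑ d ∈ f.support, monomial d (coeff d f))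
        = ∑ d ∈ f.support, X i * pderiv i (monomial d (coeff d f)) := fun i => by
    rw [map_sum, Finset.mul_sum]
  rw [Finset.sum_congr rfl fun i _ => hstep i, Finset.sum_comm]
  conv_rhs => rw [f.as_sum, Finset.smul_sum]
  refine Finset.sum_congr rfl fun d hd => ?_
  rw [euler_monomial, sum_exponents hf (mem_support_iff.1 hd)]

lemma finsupp_sum_one {d : Fin 3 →₀ ℕ} (h : ∑ i, d i = 1) :
    ∃ j, d = Finsupp.single j 1 := by
  rw [Fin.sum_univ_three] at h
  by_cases h0 : d 0 = 1
  · have e1 : d 1 = 0 := by omega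
    have e2 : d 2 = 0 := by omega
    exact ⟨0, by ext i; fin_cases i <;> simp [Finsupp.single_apply, h0, e1, e2]⟩
  by_cases h1 : d 1 = 1
  · have e0 : d 0 = 0 := by omega
    have e2 : d 2 = 0 := by omega
    exact ⟨1, by ext i; fin_cases i <;> simp [Finsupp.single_apply, h1, e0, e2]⟩
  by_cases h2 : d 2 = 1
  · have e0 : d 0 = 0 := by omega
    have e1 : d 1 = 0 := by omega
    exact ⟨2, by ext i; fin_cases i <;> simp [Finsupp.single_apply, h2, e0, e1]⟩
  · exact absurd h (by omega)

lemma hom1_eq {g : MP} (hg : g.IsHomogeneous 1) :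
    g = ∑ j, C (coeff (Finsupp.single j 1) g) * X j := by
  apply MvPolynomial.ext
  intro d
  rw [coeff_sum]
  by_cases hd : ∃ j, d = Finsupp.single j 1
  · obtain ⟨j, rfl⟩ := hd
    rw [Finset.sum_eq_single j]
    · rw [coeff_C_mul, coeff_X', if_pos rfl, mul_one]
    · intro j' _ hj'
      rw [coeff_C_mul, coeff_X', if_neg, mul_zero]
      intro hc
      exact hj' ((Finsupp.single_left_inj one_ne_zero).mp hc)
    · intro hj; exact absurd (Finset.mem_univ j) hj
  · have h1 : coeff d g = 0 := by
      by_contra h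
      exact hd (finsupp_sum_one (sum_exponents hg h))
    rw [h1]
    symm
    apply Finset.sum_eq_zero
    intro j _
    rw [coeff_C_mul, coeff_X', if_neg fun hc => hd ⟨j, hc.symm⟩, mul_zero]

lemma pderiv_hom1 {f : MP} (hf : f.IsHomogeneous 2) (i : Fin 3) :
    (pderiv i f).IsHomogeneous 1 := by
  conv_lhs => rw [f.as_sum]
  rw [map_sum]
  apply IsHomogeneous.sum
  intro d hd
  rw [pderiv_monomial]
  by_cases hdi : d i = 0
  · rw [hdi]
    norm_num
    exact isHomogeneous_zero _ _ _
  · apply isHomogeneous_monomial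
    have hdeg : ∑ j, d j = 2 := sum_exponents hf (mem_support_iff.1 hd)
    rw [degree_univ_sum]
    rw [← Finset.add_sum_erase _ d (Finset.mem_univ i)] at hdeg
    rw [← Finset.add_sum_erase _ _ (Finset.mem_univ i)]
    have herase : ∑ j ∈ (Finset.univ : Finset (Fin 3)).erase i,
          ((d - Finsupp.single i 1 : Fin 3 →₀ ℕ) j)
        = ∑ j ∈ (Finset.univ : Finset (Fin 3)).erase i, d j := by
      apply Finset.sum_congr rfl
      intro j hj
      have hji : j ≠ i := (Finset.mem_erase.1 hj).1
      simp [Finsupp.tsub_apply, Finsupp.single_apply, (Ne.symm hji : i ≠ j)]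
    rw [herase, show (d - Finsupp.single i 1 : Fin 3 →₀ ℕ) i = d i - 1 by
      simp [Finsupp.tsub_apply]]
    omega


/-! ### Quadratic form infrastructure -/

def dot (w v : V3) : ℂ := ∑ i, w i * v i

lemma dot_comm (w v : V3) : dot w v = dot v w := by
  simp [dot, mul_comm]

lemma dot_add_right (w x y : V3) : dot w (x + y) = dot w x + dot w y := by
  simp [dot, mul_add, Finset.sum_add_distrib]

lemma dot_sub_right (w x y : V3) : dot w (x - y) = dot w x - dot w y := by
  simp [dot, mul_sub, Finset.sum_sub_distrib]

lemma dot_smul_right (w : V3) (a : ℂ) (x : V3) : dot w (a • x) = a * dot w x := by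
  simp only [dot, Finset.mul_sum, Pi.smul_apply, smul_eq_mul]
  exact Finset.sum_congr rfl fun i _ => by ring

lemma dot_smul_left (w : V3) (a : ℂ) (x : V3) : dot (a • w) x = a * dot w x := by
  simp only [dot, Finset.mul_sum, Pi.smul_apply, smul_eq_mul]
  exact Finset.sum_congr rfl fun i _ => by ring

lemma dot_zero_right (w : V3) : dot w 0 = 0 := by simp [dot]

lemma dot_single_right (w : V3) (i : Fin 3) : dot w (Pi.single i 1) = w i := by
  simp [dot, Pi.single_apply]

lemma eq_zero_of_dot_forall {w : V3} (h : ∀ v, dot w v = 0) : w = 0 := by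
  funext i
  have := h (Pi.single i 1)
  rwa [dot_single_right] at this

/-- The linear map attached to a square array of coefficients. -/
def Mlin (c : Fin 3 → Fin 3 → ℂ) : V3 →ₗ[ℂ] V3 where
  toFun v := fun i => ∑ j, c i j * v j
  map_add' x y := by funext i; simp [mul_add, Finset.sum_add_distrib]
  map_smul' a x := by
    funext i
    simp only [Pi.smul_apply, smul_eq_mul, RingHom.id_apply, Finset.mul_sum]
    exact Finset.sum_congr rfl fun j _ => by ring

/-- The linear functional attached to a covector. -/
def covL (w : V3) : V3 →ₗ[ℂ] ℂ where
  toFun v := dot w v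
  map_add' x y := dot_add_right w x y
  map_smul' a x := by simpa [smul_eq_mul] using dot_smul_right w a x

def Bq (c : Fin 3 → Fin 3 → ℂ) (v w : V3) : ℂ := ∑ i, ∑ j, c i j * v i * w j

lemma Bq_eq_dot (c : Fin 3 → Fin 3 → ℂ) (v w : V3) :
    Bq c v w = dot v (Mlin c w) := by
  unfold Bq dot Mlin
  simp only [LinearMap.coe_mk, AddHom.coe_mk, Finset.mul_sum]
  exact Finset.sum_congr rfl fun i _ => Finset.sum_congr rfl fun j _ => by ring

lemma Bq_symm {c : Fin 3 → Fin 3 → ℂ} (hsym : ∀ i j, c i j = c j i) (v w : V3) :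
    Bq c v w = Bq c w v := by
  unfold Bq
  rw [Finset.sum_comm]
  exact Finset.sum_congr rfl fun i _ => Finset.sum_congr rfl fun j _ => by
    rw [hsym i j]; ring

/-- Representation of a homogeneous quadric by a symmetric coefficient array. -/
lemma quad_repr {f : MP} (hf : f.IsHomogeneous 2) :
    ∃ c : Fin 3 → Fin 3 → ℂ, (∀ i j, c i j = c j i) ∧
      (∀ v, eval v f = Bq c v v) ∧
      (∀ k v, eval v (pderiv k f) = 2 * Mlin c v k) := by
  set b : Fin 3 → Fin 3 → ℂ :=
    fun i j => coeff (Finsupp.single j 1) (pderiv i f) with hb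
  have hpd : ∀ i, pderiv i f = ∑ j, C (b i j) * X j :=
    fun i => hom1_eq (pderiv_hom1 hf i)
  have h2f : (C 2 : MP) * f = ∑ i, ∑ j, C (b i j) * (X i * X j) := by
    have h2 : (C (2:ℂ) : MP) * f = ((2:ℕ):ℂ) • f := by
      rw [smul_eq_C_mul]; norm_num
    rw [h2, Nat.cast_smul_eq_nsmul, ← euler hf]
    refine Finset.sum_congr rfl fun i _ => ?_
    rw [hpd i, Finset.mul_sum]
    exact Finset.sum_congr rfl fun j _ => by ring
  set c : Fin 3 → Fin 3 → ℂ := fun i j => (b i j + b j i) / 4 with hc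
  have hsym : ∀ i j, c i j = c j i := fun i j => by simp only [hc]; ring_nf
  have hdecomp : f = ∑ i, ∑ j, C (c i j) * (X i * X j) := by
    have hswap : ∑ i, ∑ j, C (b j i) * (X i * X j)
        = ∑ i, ∑ j, C (b i j) * (X i * X j) := by
      rw [Finset.sum_comm]
      exact Finset.sum_congr rfl fun i _ => Finset.sum_congr rfl fun j _ => by
        rw [mul_comm (X j) (X i)]
    have expand : ∀ i j, C (c i j) * (X i * X j)
        = C (4⁻¹ : ℂ) * (C (b i j) * (X i * X j))
          + C (4⁻¹ : ℂ) * (C (b j i) * (X i * X j)) := by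
      intro i j
      simp only [hc]
      rw [show ((b i j + b j i) / 4 : ℂ) = 4⁻¹ * b i j + 4⁻¹ * b j i by ring,
        C_add, C_mul, C_mul]
      ring
    have hsplit : ∑ i, ∑ j, C (c i j) * (X i * X j)
        = C (4⁻¹ : ℂ) * (∑ i, ∑ j, C (b i j) * (X i * X j))
          + C (4⁻¹ : ℂ) * (∑ i, ∑ j, C (b j i) * (X i * X j)) := by
      rw [Finset.mul_sum, Finset.mul_sum, ← Finset.sum_add_distrib]
      refine Finset.sum_congr rfl fun i _ => ?_
      rw [Finset.mul_sum, Finset.mul_sum, ← Finset.sum_add_distrib]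
      exact Finset.sum_congr rfl fun j _ => expand i j
    rw [hsplit, hswap, ← h2f]
    simp only [← mul_assoc, ← C_mul]
    rw [← add_mul, ← C_add]
    norm_num
  refine ⟨c, hsym, ?_, ?_⟩
  · intro v
    rw [hdecomp]
    unfold Bq
    rw [map_sum]
    refine Finset.sum_congr rfl fun i _ => ?_
    rw [map_sum]
    refine Finset.sum_congr rfl fun j _ => ?_
    simp only [eval_mul, eval_C, eval_X]
    ring
  · intro k v
    have per : ∀ i j : Fin 3, eval v (pderiv k (C (c i j) * (X i * X j)))
        = (if i = k then c i j * v j else 0) + (if j = k then c i j * v i else 0) := by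
      intro i j
      rw [pderiv_C_mul, pderiv_mul]
      by_cases hik : i = k <;> by_cases hjk : j = k <;>
        simp [hik, hjk, pderiv_X_self, pderiv_X_of_ne] <;> ring
    have hpk : eval v (pderiv k f)
        = ∑ i : Fin 3, ∑ j : Fin 3,
            ((if i = k then c i j * v j else 0) + (if j = k then c i j * v i else 0)) := by
      calc eval v (pderiv k f)
          = ∑ i : Fin 3, ∑ j : Fin 3, eval v (pderiv k (C (c i j) * (X i * X j))) := by
            rw [hdecomp, map_sum, map_sum]
            refine Finset.sum_congr rfl fun i _ => ?_
            rw [map_sum, map_sum]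
        _ = _ := Finset.sum_congr rfl fun i _ => Finset.sum_congr rfl fun j _ => per i j
    rw [hpk]
    simp only [Finset.sum_add_distrib]
    have hA : ∑ i : Fin 3, ∑ j : Fin 3, (if i = k then c i j * v j else 0)
        = ∑ j, c k j * v j := by
      rw [Finset.sum_eq_single k]
      · simp
      · intro i _ hik
        exact Finset.sum_eq_zero fun j _ => if_neg hik
      · intro h; exact absurd (Finset.mem_univ k) h
    have hB : ∑ i : Fin 3, ∑ j : Fin 3, (if j = k then c i j * v i else 0)
        = ∑ i, c i k * v i := by
      refine Finset.sum_congr rfl fun i _ => ?_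
      simp [Finset.sum_ite_eq']
    rw [hA, hB,
      show ∑ i, c i k * v i = ∑ j, c k j * v j from
        Finset.sum_congr rfl fun i _ => by rw [hsym i k]]
    show _ = 2 * (Mlin c v) k
    simp only [Mlin, LinearMap.coe_mk, AddHom.coe_mk]
    ring

lemma dot_add_left (x y v : V3) : dot (x + y) v = dot x v + dot y v := by
  simp [dot, add_mul, Finset.sum_add_distrib]

lemma dot_sub_left (x y v : V3) : dot (x - y) v = dot x v - dot y v := by
  simp [dot, sub_mul, Finset.sum_sub_distrib]

lemma dot_zero_left (v : V3) : dot 0 v = 0 := by simp [dot]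

lemma eq_zero_of_dot_forall' {x : V3} (h : ∀ w, dot w x = 0) : x = 0 :=
  eq_zero_of_dot_forall fun v => by rw [dot_comm]; exact h v

@[simp] lemma covL_apply (w v : V3) : covL w v = dot w v := rfl

@[simp] lemma Mlin_apply (c : Fin 3 → Fin 3 → ℂ) (v : V3) (i : Fin 3) :
    Mlin c v i = ∑ j, c i j * v j := rfl

lemma pair_indep {x y : V3} (hy : y ≠ 0) (hx : x ∉ (ℂ ∙ y)) :
    LinearIndependent ℂ ![x, y] := by
  rw [LinearIndependent.pair_iff]
  intro s t hst
  by_cases hs : s = 0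
  · subst hs
    rw [zero_smul, zero_add] at hst
    rcases smul_eq_zero.1 hst with ht | hy0
    · exact ⟨rfl, ht⟩
    · exact absurd hy0 hy
  · exfalso
    apply hx
    rw [Submodule.mem_span_singleton]
    refine ⟨-(s⁻¹ * t), ?_⟩
    have h1 : s • x = -(t • y) := by
      rw [eq_neg_iff_add_eq_zero]; exact hst
    have h2 := congrArg (fun z => s⁻¹ • z) h1
    simp only [smul_smul, inv_mul_cancel₀ hs, one_smul, smul_neg] at h2
    rw [neg_smul]
    exact h2.symm

lemma linearmap_zero_of_triple {W : Type} [AddCommGroup W] [Module ℂ W]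
    {x y z : V3} (hxy : LinearIndependent ℂ ![x, y])
    (hz : z ∉ Submodule.span ℂ {x, y}) (T : V3 →ₗ[ℂ] W)
    (h1 : T x = 0) (h2 : T y = 0) (h3 : T z = 0) : T = 0 := by
  have hr : Set.range ![x, y] = {x, y} := by
    ext w
    constructor
    · rintro ⟨i, rfl⟩; fin_cases i <;> simp
    · rintro (rfl | rfl)
      exacts [⟨0, rfl⟩, ⟨1, rfl⟩]
  have li : LinearIndependent ℂ (Fin.cons z ![x, y] : Fin 3 → V3) :=
    linearIndependent_fin_cons.2 ⟨hxy, by rwa [hr]⟩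
  have htop : Submodule.span ℂ (Set.range (Fin.cons z ![x, y] : Fin 3 → V3)) = ⊤ :=
    li.span_eq_top_of_card_eq_finrank (by simp)
  refine LinearMap.ext_on htop ?_
  rintro v ⟨i, rfl⟩
  fin_cases i
  · exact h3
  · exact h1
  · exact h2

lemma exists_eval_ne_zero {f : MP} (hf0 : f ≠ 0) : ∃ v, eval v f ≠ 0 := by
  by_contra h
  push_neg at h
  exact hf0 (MvPolynomial.funext fun v => by rw [h v, map_zero])

/-- Classification of a nonzero quadric over `ℂ`: either its symmetric matrix is
nondegenerate, or it factors as a product of two linear forms. -/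
lemma quad_classify {f : MP} (hf : f.IsHomogeneous 2) (hf0 : f ≠ 0) :
    (∃ c : Fin 3 → Fin 3 → ℂ, (∀ i j, c i j = c j i) ∧
        (∀ v, eval v f = Bq c v v) ∧
        (∀ k v, eval v (pderiv k f) = 2 * Mlin c v k) ∧
        (∀ v : V3, v ≠ 0 → Mlin c v ≠ 0)) ∨
    (∃ w₁ w₂ : V3, w₁ ≠ 0 ∧ w₂ ≠ 0 ∧ ∀ v, eval v f = dot w₁ v * dot w₂ v) := by
  obtain ⟨c, csym, hev, hpd⟩ := quad_repr hf
  by_cases hnd : ∀ v : V3, v ≠ 0 → Mlin c v ≠ 0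
  · exact Or.inl ⟨c, csym, hev, hpd, hnd⟩
  right
  push_neg at hnd
  obtain ⟨u, hu0, hMu⟩ := hnd
  obtain ⟨v₀, ha⟩ := exists_eval_ne_zero hf0
  set a := eval v₀ f with haa
  have hBsym : ∀ x y : V3, dot x (Mlin c y) = dot y (Mlin c x) := fun x y => by
    rw [← Bq_eq_dot, ← Bq_eq_dot]
    exact Bq_symm csym x y
  set lam : V3 := Mlin c v₀ with hlam
  set NM : V3 →ₗ[ℂ] V3 := a • Mlin c - (covL lam).smulRight lam with hNMdef
  have hNMapp : ∀ v, NM v = a • Mlin c v - dot lam v • lam := fun v => by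
    simp [hNMdef]
  have hNq : ∀ v, dot v (NM v) = a * eval v f - (dot lam v) ^ 2 := fun v => by
    rw [hev v, Bq_eq_dot, hNMapp, dot_sub_right, dot_smul_right, dot_smul_right,
      dot_comm v lam]
    ring
  have hNsym : ∀ x y, dot x (NM y) = dot y (NM x) := fun x y => by
    rw [hNMapp, hNMapp, dot_sub_right, dot_sub_right, dot_smul_right, dot_smul_right,
      dot_smul_right, dot_smul_right, hBsym x y, dot_comm x lam, dot_comm y lam]
    ring
  have hdotlamu : dot lam u = 0 := by
    rw [hlam, dot_comm, hBsym u v₀, hMu, dot_zero_right]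
  have hNMu : NM u = 0 := by
    rw [hNMapp, hMu, hdotlamu]
    simp
  have hdotlamv₀ : dot lam v₀ = a := by
    rw [hlam, dot_comm, ← Bq_eq_dot, ← hev]
  have hNMv₀ : NM v₀ = 0 := by
    rw [hNMapp, hdotlamv₀, ← hlam]
    simp
  have hevu : eval u f = 0 := by
    rw [hev u, Bq_eq_dot, hMu, dot_zero_right]
  by_cases hNM0 : ∀ v, NM v = 0
  · have key : ∀ v, eval v f = dot (a⁻¹ • lam) v * dot lam v := fun v => by
      have h1 := hNq v
      rw [hNM0 v, dot_zero_right] at h1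
      rw [dot_smul_left]
      field_simp
      linear_combination -h1
    have hlam0 : lam ≠ 0 := by
      intro h0
      apply hf0
      apply MvPolynomial.funext
      intro v
      rw [key v, h0, dot_zero_left, mul_zero, map_zero]
    exact ⟨a⁻¹ • lam, lam, smul_ne_zero (inv_ne_zero ha) hlam0, hlam0, key⟩
  · push_neg at hNM0
    obtain ⟨v', hv'⟩ := hNM0
    have hex : ∃ v₁, dot v₁ (NM v₁) ≠ 0 := by
      by_contra h
      push_neg at h
      apply hv'
      apply eq_zero_of_dot_forall'
      intro w
      have h1 := h (v' + w)
      rw [map_add, dot_add_left, dot_add_right, dot_add_right, h v', hNsym v' w] at h1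
      have h2 : (2 : ℂ) * dot w (NM v') = 0 := by linear_combination h1 - h w
      have := mul_eq_zero.1 h2
      simpa using this
    obtain ⟨v₁, hs⟩ := hex
    set s := dot v₁ (NM v₁) with hss
    have hNMv₁ : NM v₁ ≠ 0 := fun h0 => hs (by rw [hss, h0, dot_zero_right])
    have huv : LinearIndependent ℂ ![v₀, u] := by
      apply pair_indep hu0
      intro hmem
      rw [Submodule.mem_span_singleton] at hmem
      obtain ⟨t, ht⟩ := hmem
      apply ha
      rw [haa, ← ht, eval_smul_hom hf, hevu, mul_zero]
    have hv₁span : v₁ ∉ Submodule.span ℂ {v₀, u} := by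
      intro hmem
      rw [Submodule.mem_span_pair] at hmem
      obtain ⟨α, β, hab⟩ := hmem
      apply hNMv₁
      rw [← hab, map_add, map_smul, map_smul, hNMv₀, hNMu]
      simp
    have hT : (s • NM - (covL (NM v₁)).smulRight (NM v₁)) = 0 := by
      apply linearmap_zero_of_triple huv hv₁span
      · have : dot (NM v₁) v₀ = 0 := by
          rw [dot_comm, hNsym v₀ v₁, hNMv₀, dot_zero_right]
        simp [hNMv₀, this]
      · have : dot (NM v₁) u = 0 := by
          rw [dot_comm, hNsym u v₁, hNMu, dot_zero_right]
        simp [hNMu, this]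
      · have : dot (NM v₁) v₁ = s := by rw [dot_comm, hss]
        simp [this, sub_self]
    have hTapp : ∀ v, s • NM v = dot (NM v₁) v • NM v₁ := fun v => by
      have h0 := congrArg (fun T : V3 →ₗ[ℂ] V3 => T v) hT
      simp only [LinearMap.sub_apply, LinearMap.smul_apply, LinearMap.smulRight_apply,
        LinearMap.zero_apply, covL_apply, sub_eq_zero] at h0
      exact h0
    have hkey : ∀ v, s * (a * eval v f - (dot lam v) ^ 2) = (dot (NM v₁) v) ^ 2 := fun v => by
      rw [← hNq v, ← dot_smul_right, hTapp v, dot_smul_right, dot_comm v (NM v₁)]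
      ring
    obtain ⟨t, ht⟩ := IsAlgClosed.exists_pow_nat_eq (s⁻¹) (n := 2) (by norm_num)
    set μ : V3 := t • NM v₁ with hμ
    have hμv : ∀ v, (dot μ v) ^ 2 = a * eval v f - (dot lam v) ^ 2 := fun v => by
      rw [hμ, dot_smul_left, mul_pow, ht, ← hkey v, ← mul_assoc,
        inv_mul_cancel₀ hs, one_mul]
    have keyev : ∀ v, eval v f
        = dot (a⁻¹ • (lam + Complex.I • μ)) v * dot (lam - Complex.I • μ) v := fun v => by
      rw [dot_smul_left _ a⁻¹ v, dot_add_left, dot_sub_left, dot_smul_left μ Complex.I v]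
      symm
      calc a⁻¹ * (dot lam v + Complex.I * dot μ v) * (dot lam v - Complex.I * dot μ v)
          = a⁻¹ * ((dot lam v) ^ 2 - Complex.I ^ 2 * (dot μ v) ^ 2) := by ring
        _ = a⁻¹ * (a * eval v f) := by rw [Complex.I_sq, hμv v]; ring
        _ = eval v f := by rw [← mul_assoc, inv_mul_cancel₀ ha, one_mul]
    have hw₁ : a⁻¹ • (lam + Complex.I • μ) ≠ 0 := by
      intro h0
      apply hf0
      apply MvPolynomial.funext
      intro v
      rw [keyev v, h0, dot_zero_left, zero_mul, map_zero]
    have hw₂ : lam - Complex.I • μ ≠ 0 := by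
      intro h0
      apply hf0
      apply MvPolynomial.funext
      intro v
      rw [keyev v, h0, dot_zero_left, mul_zero, map_zero]
    exact ⟨_, _, hw₁, hw₂, keyev⟩


/-- Three distinct points on a smooth conic are in linearly general position. -/
lemma smooth_sep {c : Fin 3 → Fin 3 → ℂ} (csym : ∀ i j, c i j = c j i)
    (hnd : ∀ v : V3, v ≠ 0 → Mlin c v ≠ 0)
    {p q₁ q₂ : P2} (hp : Bq c p.rep p.rep = 0) (h1 : Bq c q₁.rep q₁.rep = 0)
    (h2 : Bq c q₂.rep q₂.rep = 0) (hpq₁ : p ≠ q₁) (hpq₂ : p ≠ q₂) (hq12 : q₁ ≠ q₂) :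
    p.rep ∉ Submodule.span ℂ {q₁.rep, q₂.rep} := by
  intro hmem
  rw [Submodule.mem_span_pair] at hmem
  obtain ⟨α, β, hab⟩ := hmem
  have hcol : ∀ (γ : ℂ) (q : P2), γ • q.rep = p.rep → p = q := by
    intro γ q h
    have hγ : γ ≠ 0 := by
      rintro rfl
      exact p.rep_nonzero (by rw [← h, zero_smul])
    have := (Projectivization.mk_eq_mk_iff ℂ p.rep q.rep p.rep_nonzero
      q.rep_nonzero).2 ⟨Units.mk0 γ hγ, h⟩
    rwa [Projectivization.mk_rep, Projectivization.mk_rep] at this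
  have hBsym : ∀ x y : V3, dot x (Mlin c y) = dot y (Mlin c x) := fun x y => by
    rw [← Bq_eq_dot, ← Bq_eq_dot]; exact Bq_symm csym x y
  have e1 : ∀ z : V3, dot (α • q₁.rep + β • q₂.rep) (Mlin c z)
      = α * dot q₁.rep (Mlin c z) + β * dot q₂.rep (Mlin c z) := fun z => by
    rw [dot_add_left, dot_smul_left, dot_smul_left]
  have hexp : Bq c p.rep p.rep
      = α * α * Bq c q₁.rep q₁.rep + 2 * (α * β) * Bq c q₁.rep q₂.rep
        + β * β * Bq c q₂.rep q₂.rep := by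
    calc Bq c p.rep p.rep = dot p.rep (Mlin c p.rep) := Bq_eq_dot c _ _
      _ = dot (α • q₁.rep + β • q₂.rep) (Mlin c (α • q₁.rep + β • q₂.rep)) := by rw [hab]
      _ = α * (α * dot q₁.rep (Mlin c q₁.rep) + β * dot q₂.rep (Mlin c q₁.rep))
          + β * (α * dot q₁.rep (Mlin c q₂.rep) + β * dot q₂.rep (Mlin c q₂.rep)) := by
            rw [map_add, map_smul, map_smul, dot_add_right, dot_smul_right,
              dot_smul_right, e1, e1]
      _ = _ := by
            rw [← Bq_eq_dot, ← Bq_eq_dot, ← Bq_eq_dot, ← Bq_eq_dot,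
              Bq_symm csym q₂.rep q₁.rep]
            ring
  rw [hp, h1, h2] at hexp
  have hprod : α * β * Bq c q₁.rep q₂.rep = 0 := by linear_combination - hexp / 2
  have hα : α ≠ 0 := by
    rintro rfl
    rw [zero_smul, zero_add] at hab
    exact hpq₂ (hcol β q₂ hab)
  have hβ : β ≠ 0 := by
    rintro rfl
    rw [zero_smul, add_zero] at hab
    exact hpq₁ (hcol α q₁ hab)
  have hB12 : Bq c q₁.rep q₂.rep = 0 := by
    rcases mul_eq_zero.1 hprod with h | h
    · rcases mul_eq_zero.1 h with h' | h'
      · exact absurd h' hα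
      · exact absurd h' hβ
    · exact h
  -- now derive a contradiction with nondegeneracy
  have hind : LinearIndependent ℂ ![q₁.rep, q₂.rep] :=
    pair_indep q₂.rep_nonzero (rep_not_mem_span (Ne.symm hq12))
  have hspan_ne : Submodule.span ℂ ({q₁.rep, q₂.rep} : Set V3) ≠ ⊤ := by
    intro htop
    have hle := finrank_span_le_card (R := ℂ) ({q₁.rep, q₂.rep} : Set V3)
    rw [htop] at hle
    have h3 : Module.finrank ℂ (⊤ : Submodule ℂ V3) = 3 := by
      rw [finrank_top]; simp [Module.finrank_pi]
    have hc2 : ({q₁.rep, q₂.rep} : Set V3).toFinset.card ≤ 2 := by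
      rw [Set.toFinset_insert, Set.toFinset_singleton]
      exact (Finset.card_insert_le _ _).trans (by simp)
    omega
  obtain ⟨v₃, hv₃⟩ : ∃ v₃, v₃ ∉ Submodule.span ℂ ({q₁.rep, q₂.rep} : Set V3) := by
    by_contra h
    push_neg at h
    exact hspan_ne (Submodule.eq_top_iff'.2 h)
  -- all pairings of Mlin with q₁.rep, q₂.rep vanish
  have d11 : dot (Mlin c q₁.rep) q₁.rep = 0 := by
    rw [dot_comm, ← Bq_eq_dot]; exact h1
  have d22 : dot (Mlin c q₂.rep) q₂.rep = 0 := by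
    rw [dot_comm, ← Bq_eq_dot]; exact h2
  have d12 : dot (Mlin c q₂.rep) q₁.rep = 0 := by
    rw [dot_comm, ← Bq_eq_dot]; exact hB12
  have d21 : dot (Mlin c q₁.rep) q₂.rep = 0 := by
    rw [dot_comm, hBsym, ← Bq_eq_dot]
    exact hB12
  set t₁ := dot (Mlin c q₁.rep) v₃ with ht₁
  set t₂ := dot (Mlin c q₂.rep) v₃ with ht₂
  rcases eq_or_ne t₁ 0 with h₁0 | h₁0
  · rcases eq_or_ne t₂ 0 with h₂0 | h₂0
    · -- Mlin q₁.rep pairs to zero with everything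
      have hzero : covL (Mlin c q₁.rep) = 0 := by
        apply linearmap_zero_of_triple hind hv₃
        · simpa using d11
        · simpa using d21
        · simpa using h₁0
      have : Mlin c q₁.rep = 0 := by
        apply eq_zero_of_dot_forall
        intro v
        have := congrArg (fun T : V3 →ₗ[ℂ] ℂ => T v) hzero
        simpa using this
      exact hnd q₁.rep q₁.rep_nonzero this
    · -- t₁ = 0, t₂ ≠ 0 : use the vanishing covector
      have hzero : covL (t₂ • Mlin c q₁.rep - t₁ • Mlin c q₂.rep) = 0 := by
        apply linearmap_zero_of_triple hind hv₃ <;>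
          simp [dot_sub_left, dot_smul_left, d11, d22, d12, d21] <;> ring
      have hws : t₂ • Mlin c q₁.rep - t₁ • Mlin c q₂.rep = 0 := by
        apply eq_zero_of_dot_forall
        intro v
        have := congrArg (fun T : V3 →ₗ[ℂ] ℂ => T v) hzero
        simpa using this
      rw [h₁0, zero_smul, sub_zero] at hws
      have : Mlin c q₁.rep = 0 := (smul_eq_zero.1 hws).resolve_left h₂0
      exact hnd q₁.rep q₁.rep_nonzero this
  · -- t₁ ≠ 0
    have hzero : covL (t₂ • Mlin c q₁.rep - t₁ • Mlin c q₂.rep) = 0 := by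
      apply linearmap_zero_of_triple hind hv₃ <;>
        simp [dot_sub_left, dot_smul_left, d11, d22, d12, d21] <;> ring
    have hws : t₂ • Mlin c q₁.rep - t₁ • Mlin c q₂.rep = 0 := by
      apply eq_zero_of_dot_forall
      intro v
      have := congrArg (fun T : V3 →ₗ[ℂ] ℂ => T v) hzero
      simpa using this
    have hz : t₂ • q₁.rep - t₁ • q₂.rep ≠ 0 := by
      intro h0
      have := (LinearIndependent.pair_iff.1 hind t₂ (-t₁) (by
        rw [neg_smul, ← sub_eq_add_neg]; exact h0)).2
      simp at this
      exact h₁0 this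
    apply hnd _ hz
    rw [map_sub, map_smul, map_smul]
    exact hws

lemma lin_ne_zero {w : V3} (hw : w ≠ 0) : lin w ≠ 0 := by
  intro h0
  apply hw
  apply eq_zero_of_dot_forall
  intro v
  rw [show dot w v = eval v (lin w) from (eval_lin w v).symm, h0, map_zero]

lemma ker_covL_finrank {w : V3} (hw : w ≠ 0) :
    Module.finrank ℂ (LinearMap.ker (covL w)) = 2 := by
  obtain ⟨i, hi⟩ := Function.ne_iff.1 hw
  have hi' : w i ≠ 0 := by simpa using hi
  have hsurj : Function.Surjective (covL w) := by
    intro x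
    refine ⟨(x * (w i)⁻¹) • (Pi.single i 1 : V3), ?_⟩
    rw [covL_apply, dot_smul_right, dot_single_right]
    field_simp
  have h1 : Module.finrank ℂ (LinearMap.range (covL w)) = 1 := by
    rw [LinearMap.range_eq_top.2 hsurj, finrank_top]
    simp
  have h2 := LinearMap.finrank_range_add_finrank_ker (covL w)
  have h3 : Module.finrank ℂ V3 = 3 := by simp [Module.finrank_pi]
  omega

/-- A finset of points lying on a conic lies on a line, a smooth conic, or a
union of two lines. -/
lemma conic_to_goal {S : Finset P2} {q : MP}
    (hq2 : q.IsHomogeneous 2) (hq0 : q ≠ 0) (hqv : ∀ x ∈ S, PVanish q x) :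
    (∃ L : Set P2, IsLine L ∧ ↑S ⊆ L) ∨
    (∃ C : Set P2, IsSmoothConic C ∧ ↑S ⊆ C) ∨
    (∃ L₁ L₂ : Set P2, IsLine L₁ ∧ IsLine L₂ ∧ ↑S ⊆ L₁ ∪ L₂) := by
  rcases quad_classify hq2 hq0 with ⟨c, csym, hev, hpd, hnd⟩ | ⟨w₁, w₂, hw₁, hw₂, hfac⟩
  · right; left
    refine ⟨{x : P2 | x.submodule ≤ ⊤ ∧ PVanish q x}, ⟨⊤, ?_, q, hq2, rfl, ?_, ?_⟩, ?_⟩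
    · rw [finrank_top]; simp [Module.finrank_pi]
    · obtain ⟨v, hv⟩ := exists_eval_ne_zero hq0
      exact ⟨v, trivial, hv⟩
    · intro v _ hv0 hv
      obtain ⟨i₀, hi₀⟩ := Function.ne_iff.1 (hnd v hv0)
      refine ⟨Pi.single i₀ 1, trivial, ?_⟩
      have : ∀ i, eval v (pderiv i q) * (Pi.single i₀ 1 : V3) i
          = if i = i₀ then 2 * Mlin c v i else 0 := by
        intro i
        rcases eq_or_ne i i₀ with rfl | hne
        · simp [hpd]
        · simp [Pi.single_apply, hne, if_neg]
      rw [Finset.sum_congr rfl fun i _ => this i, Finset.sum_ite_eq' Finset.univ i₀]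
      simp only [Finset.mem_univ, if_true]
      exact mul_ne_zero two_ne_zero (by simpa using hi₀)
    · intro x hx
      exact ⟨le_top, hqv x (by exact_mod_cast hx)⟩
  · right; right
    refine ⟨LinSet (LinearMap.ker (covL w₁)), LinSet (LinearMap.ker (covL w₂)),
      ⟨_, ker_covL_finrank hw₁, rfl⟩, ⟨_, ker_covL_finrank hw₂, rfl⟩, ?_⟩
    intro x hx
    have hx' : x ∈ S := by exact_mod_cast hx
    have h0 : dot w₁ x.rep * dot w₂ x.rep = 0 := by
      rw [← hfac]
      exact hqv x hx' x.rep x.rep_nonzero x.mk_rep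
    have hsub : x.submodule = ℂ ∙ x.rep := x.submodule_eq
    rcases mul_eq_zero.1 h0 with h | h
    · left
      show x.submodule ≤ _
      rw [hsub, Submodule.span_singleton_le_iff_mem]
      exact LinearMap.mem_ker.2 h
    · right
      show x.submodule ≤ _
      rw [hsub, Submodule.span_singleton_le_iff_mem]
      exact LinearMap.mem_ker.2 h


def OnConic (S : Finset P2) : Prop :=
  ∃ q : MP, q.IsHomogeneous 2 ∧ q ≠ 0 ∧ ∀ x ∈ S, PVanish q x

lemma cover_contra {m : ℕ} {S : Finset P2} (hCB : SatisfiesCB m S) {p : P2} (hp : p ∈ S)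
    {g₁ g₂ : MP} {d₁ d₂ : ℕ} (h₁ : g₁.IsHomogeneous d₁) (h₂ : g₂.IsHomogeneous d₂)
    (hd : d₁ + d₂ ≤ m)
    (hvan : ∀ q ∈ S, q ≠ p → PVanish g₁ q ∨ PVanish g₂ q)
    (hnz₁ : eval p.rep g₁ ≠ 0) (hnz₂ : eval p.rep g₂ ≠ 0) : False := by
  obtain ⟨g₀, hg₀, hg₀nz⟩ := exists_lin_nonzero p
  have hfhom : (g₁ * g₂ * g₀ ^ (m - (d₁ + d₂))).IsHomogeneous m := by
    have h' := (h₁.mul h₂).mul (hg₀.pow (m - (d₁ + d₂)))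
    rwa [one_mul, Nat.add_sub_cancel' hd] at h'
  refine cb_contra hCB hp hfhom ?_ ?_
  · intro x hx hxp
    rcases hvan x hx hxp with h | h
    · exact pvanish_mul_left (pvanish_mul_left h)
    · exact pvanish_mul_left (pvanish_mul_right h)
  · rw [map_mul, map_mul, map_pow]
    exact mul_ne_zero (mul_ne_zero hnz₁ hnz₂) (pow_ne_zero _ hg₀nz)

lemma smooth_cover {c : Fin 3 → Fin 3 → ℂ} (csym : ∀ i j, c i j = c j i)
    (hnd : ∀ v : V3, v ≠ 0 → Mlin c v ≠ 0) {q₂ : MP} (hq2 : q₂.IsHomogeneous 2)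
    (hev : ∀ v, eval v q₂ = Bq c v v)
    {Γ : Finset P2} (hΓ : ∀ x ∈ Γ, PVanish q₂ x) {p : P2} (hp : p ∈ Γ) :
    ∃ f : MP, f.IsHomogeneous ((Γ.card - 1 + 1) / 2) ∧
      (∀ x ∈ Γ, x ≠ p → PVanish f x) ∧ eval p.rep f ≠ 0 := by
  have hBz : ∀ x ∈ Γ, Bq c x.rep x.rep = 0 := fun x hx => by
    rw [← hev]
    exact (pvanish_iff hq2 x).1 (hΓ x hx)
  obtain ⟨f, hfhom, hfv, hfnz⟩ := cover_by_pair_lines (Γ.erase p)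
    (fun x hx => (Finset.mem_erase.1 hx).1)
    (fun a ha b hb hab => by
      have haΓ := Finset.mem_erase.1 ha
      have hbΓ := Finset.mem_erase.1 hb
      exact exists_line_pair
        (smooth_sep csym hnd (hBz p hp) (hBz a haΓ.2) (hBz b hbΓ.2)
          (Ne.symm haΓ.1) (Ne.symm hbΓ.1) hab))
  rw [Finset.card_erase_of_mem hp] at hfhom
  exact ⟨f, hfhom, fun x hx hxp => hfv x (Finset.mem_erase.2 ⟨hxp, hx⟩), hfnz⟩

lemma three_lines_case {m : ℕ} {S : Finset P2} (hCB : SatisfiesCB m S)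
    (hm3 : 3 ≤ m) (hcard : 2 * S.card ≤ 5 * m + 2)
    {w₁ w₂ w₃ : V3} (h1 : w₁ ≠ 0) (h2 : w₂ ≠ 0) (h3 : w₃ ≠ 0)
    (hcover : ∀ x ∈ S, PVanish (lin w₁) x ∨ PVanish (lin w₂) x ∨ PVanish (lin w₃) x) :
    OnConic S := by
  have hconic : ∀ a b : V3, a ≠ 0 → b ≠ 0 →
      (∀ x ∈ S, PVanish (lin a * lin b) x) → OnConic S := fun a b ha hb hv =>
    ⟨lin a * lin b, (lin_isHom a).mul (lin_isHom b),
      mul_ne_zero (lin_ne_zero ha) (lin_ne_zero hb), hv⟩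
  set E₁ := S.filter (fun x => ¬ PVanish (lin w₂ * lin w₃) x) with hE₁
  set E₂ := S.filter (fun x => ¬ PVanish (lin w₁ * lin w₃) x) with hE₂
  set E₃ := S.filter (fun x => ¬ PVanish (lin w₁ * lin w₂) x) with hE₃
  by_cases hc₁ : E₁.Nonempty
  swap
  · apply hconic w₂ w₃ h2 h3
    intro x hx
    by_contra h
    exact hc₁ ⟨x, Finset.mem_filter.2 ⟨hx, h⟩⟩
  by_cases hc₂ : E₂.Nonempty
  swap
  · apply hconic w₁ w₃ h1 h3
    intro x hx
    by_contra h
    exact hc₂ ⟨x, Finset.mem_filter.2 ⟨hx, h⟩⟩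
  by_cases hc₃ : E₃.Nonempty
  swap
  · apply hconic w₁ w₂ h1 h2
    intro x hx
    by_contra h
    exact hc₃ ⟨x, Finset.mem_filter.2 ⟨hx, h⟩⟩
  exfalso
  have key : ∀ (a b : V3) (E : Finset P2),
      E = S.filter (fun x => ¬ PVanish (lin a * lin b) x) → E.Nonempty → m ≤ E.card := by
    intro a b E hE hne
    have hcb := residuation hCB ((lin_isHom a).mul (lin_isHom b)) (by omega : 2 ≤ m)
    rw [← hE] at hcb
    have := card_lower hcb hne
    omega
  have k₁ := key _ _ _ hE₁ hc₁
  have k₂ := key _ _ _ hE₂ hc₂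
  have k₃ := key _ _ _ hE₃ hc₃
  have hdisj₁₂ : Disjoint E₁ E₂ := by
    rw [Finset.disjoint_left]
    intro x hx1 hx2
    rw [hE₁, Finset.mem_filter] at hx1
    rw [hE₂, Finset.mem_filter] at hx2
    rcases hcover x hx1.1 with h | h | h
    · exact hx2.2 (pvanish_mul_left h)
    · exact hx1.2 (pvanish_mul_left h)
    · exact hx1.2 (pvanish_mul_right h)
  have hdisj₁₃ : Disjoint E₁ E₃ := by
    rw [Finset.disjoint_left]
    intro x hx1 hx3
    rw [hE₁, Finset.mem_filter] at hx1
    rw [hE₃, Finset.mem_filter] at hx3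
    rcases hcover x hx1.1 with h | h | h
    · exact hx3.2 (pvanish_mul_left h)
    · exact hx1.2 (pvanish_mul_left h)
    · exact hx1.2 (pvanish_mul_right h)
  have hdisj₂₃ : Disjoint E₂ E₃ := by
    rw [Finset.disjoint_left]
    intro x hx2 hx3
    rw [hE₂, Finset.mem_filter] at hx2
    rw [hE₃, Finset.mem_filter] at hx3
    rcases hcover x hx2.1 with h | h | h
    · exact hx2.2 (pvanish_mul_left h)
    · exact hx3.2 (pvanish_mul_right h)
    · exact hx2.2 (pvanish_mul_right h)
  have hsub : E₁ ∪ E₂ ∪ E₃ ⊆ S := by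
    refine Finset.union_subset (Finset.union_subset ?_ ?_) ?_
    · rw [hE₁]; exact Finset.filter_subset _ _
    · rw [hE₂]; exact Finset.filter_subset _ _
    · rw [hE₃]; exact Finset.filter_subset _ _
  have hcard3 : E₁.card + E₂.card + E₃.card = (E₁ ∪ E₂ ∪ E₃).card := by
    rw [Finset.card_union_of_disjoint, Finset.card_union_of_disjoint hdisj₁₂]
    rw [Finset.disjoint_union_left]
    exact ⟨hdisj₁₃, hdisj₂₃⟩
  have hu := Finset.card_le_card hsub
  rw [← hcard3] at hu
  omega

lemma line_branch {m : ℕ} (ih : ∀ k, k < m → ∀ T : Finset P2,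
      SatisfiesCB k T → 2 * T.card ≤ 5 * k + 2 → OnConic T)
    {S : Finset P2} (hCB : SatisfiesCB m S)
    (hm3 : 3 ≤ m) (hcard : 2 * S.card ≤ 5 * m + 2)
    {wℓ : V3} (hwℓ : wℓ ≠ 0)
    (hline : m ≤ (S.filter (fun x => PVanish (lin wℓ) x)).card) : OnConic S := by
  set Γ := S.filter (fun x => ¬ PVanish (lin wℓ) x) with hΓdef
  have hsplit : (S.filter (fun x => PVanish (lin wℓ) x)).card + Γ.card = S.card := by
    rw [hΓdef]
    exact Finset.card_filter_add_card_filter_not _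
  by_cases hne : Γ.Nonempty
  swap
  · refine ⟨lin wℓ * lin wℓ, (lin_isHom _).mul (lin_isHom _),
      mul_ne_zero (lin_ne_zero hwℓ) (lin_ne_zero hwℓ), fun x hx => ?_⟩
    have hv : PVanish (lin wℓ) x := by
      by_contra h
      exact hne ⟨x, Finset.mem_filter.2 ⟨hx, h⟩⟩
    exact pvanish_mul_left hv
  have hcbΓ : SatisfiesCB (m - 1) Γ := residuation hCB (lin_isHom wℓ) (by omega)
  have hg1 : m + 1 ≤ Γ.card := by
    have := card_lower hcbΓ hne
    omega
  have hg2 : 2 * Γ.card ≤ 3 * m + 2 := by omega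
  have hOC : OnConic Γ := ih (m - 1) (by omega) Γ hcbΓ (by omega)
  obtain ⟨q₂, hq₂2, hq₂0, hq₂v⟩ := hOC
  rcases quad_classify hq₂2 hq₂0 with ⟨c, csym, hev, hpd, hnd⟩ | ⟨wc, wd, hwc, hwd, hfac⟩
  · exfalso
    obtain ⟨p, hp⟩ := hne
    obtain ⟨f₁, hf₁hom, hf₁v, hf₁nz⟩ := smooth_cover csym hnd hq₂2 hev hq₂v hp
    have hpS : p ∈ S := (Finset.mem_filter.1 hp).1
    have hnz₁ : eval p.rep (lin wℓ) ≠ 0 := by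
      intro h0
      exact (Finset.mem_filter.1 hp).2 ((pvanish_iff (lin_isHom wℓ) p).2 h0)
    exact cover_contra hCB hpS (lin_isHom wℓ) hf₁hom (by omega)
      (fun x hx hxp => by
        by_cases h : PVanish (lin wℓ) x
        · exact Or.inl h
        · exact Or.inr (hf₁v x (Finset.mem_filter.2 ⟨hx, h⟩) hxp))
      hnz₁ hf₁nz
  · apply three_lines_case hCB hm3 hcard hwℓ hwc hwd
    intro x hx
    by_cases h : PVanish (lin wℓ) x
    · exact Or.inl h
    · have hxΓ : x ∈ Γ := Finset.mem_filter.2 ⟨hx, h⟩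
      have h0 : dot wc x.rep * dot wd x.rep = 0 := by
        rw [← hfac]
        exact hq₂v x hxΓ x.rep x.rep_nonzero x.mk_rep
      rcases mul_eq_zero.1 h0 with h' | h'
      · exact Or.inr (Or.inl (by rw [pvanish_iff (lin_isHom wc), eval_lin]; exact h'))
      · exact Or.inr (Or.inr (by rw [pvanish_iff (lin_isHom wd), eval_lin]; exact h'))

lemma main_conic : ∀ m : ℕ, ∀ S : Finset P2,
    SatisfiesCB m S → 2 * S.card ≤ 5 * m + 2 → OnConic S := by
  intro m
  induction m using Nat.strong_induction_on with
  | _ m ih =>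
  intro S hCB hcard
  by_cases hsmall : S.card ≤ 5
  · obtain ⟨q, hq2, hq0, hqv⟩ := exists_conic S hsmall
    exact ⟨q, hq2, hq0, hqv⟩
  push_neg at hsmall
  have hm2 : 2 ≤ m := by omega
  set P : ℕ → Prop := fun n => ∃ q : MP, q.IsHomogeneous 2 ∧ q ≠ 0 ∧
    n ≤ (S.filter (fun x => PVanish q x)).card with hPdef
  have hP5 : P 5 := by
    obtain ⟨T, hTs, hTc⟩ := Finset.exists_subset_card_eq (s := S) (n := 5) (by omega)
    obtain ⟨q, hq2, hq0, hqv⟩ := exists_conic T (by omega)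
    refine ⟨q, hq2, hq0, ?_⟩
    calc 5 = T.card := hTc.symm
      _ ≤ _ := Finset.card_le_card
          (fun x hx => Finset.mem_filter.2 ⟨hTs hx, hqv x hx⟩)
  set b := Nat.findGreatest P S.card with hbdef
  have hPb : P b := Nat.findGreatest_spec (m := 5) (by omega) hP5
  have hb5 : 5 ≤ b := Nat.le_findGreatest (by omega) hP5
  have hmax : ∀ n, P n → n ≤ S.card → n ≤ b := by
    intro n hPn hn
    by_contra h
    push_neg at h
    exact Nat.findGreatest_is_greatest h hn hPn
  obtain ⟨q0, hq02, hq00, hq0card⟩ := hPb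
  set Γ := S.filter (fun x => ¬ PVanish q0 x) with hΓdef
  have hsplit : (S.filter (fun x => PVanish q0 x)).card + Γ.card = S.card := by
    rw [hΓdef]
    exact Finset.card_filter_add_card_filter_not _
  by_cases hne : Γ.Nonempty
  swap
  · refine ⟨q0, hq02, hq00, fun x hx => ?_⟩
    by_contra h
    exact hne ⟨x, Finset.mem_filter.2 ⟨hx, h⟩⟩
  have hcbΓ : SatisfiesCB (m - 2) Γ := residuation hCB hq02 hm2
  have hn1 : m ≤ Γ.card := by
    have := card_lower hcbΓ hne
    omega
  have hm3 : 3 ≤ m := by omega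
  have hOCΓ : OnConic Γ := ih (m - 2) (by omega) Γ hcbΓ (by omega)
  obtain ⟨q₁, hq₁2, hq₁0, hq₁v⟩ := hOCΓ
  have hΓb : Γ.card ≤ b := by
    apply hmax
    · exact ⟨q₁, hq₁2, hq₁0, Finset.card_le_card
        (fun x hx => Finset.mem_filter.2 ⟨(Finset.mem_filter.1 hx).1, hq₁v x hx⟩)⟩
    · exact Finset.card_le_card (Finset.filter_subset _ _)
  have hn1le : Γ.card ≤ 2 * m - 3 := by omega
  rcases quad_classify hq₁2 hq₁0 with ⟨c, csym, hev, hpd, hnd⟩ | ⟨w₁, w₂, hw₁, hw₂, hfac⟩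
  · exfalso
    obtain ⟨p, hp⟩ := hne
    obtain ⟨f₁, hf₁hom, hf₁v, hf₁nz⟩ := smooth_cover csym hnd hq₁2 hev hq₁v hp
    have hpS : p ∈ S := (Finset.mem_filter.1 hp).1
    have hnzq0 : eval p.rep q0 ≠ 0 := by
      intro h0
      exact (Finset.mem_filter.1 hp).2 ((pvanish_iff hq02 p).2 h0)
    exact cover_contra hCB hpS hq02 hf₁hom (by omega)
      (fun x hx hxp => by
        by_cases h : PVanish q0 x
        · exact Or.inl h
        · exact Or.inr (hf₁v x (Finset.mem_filter.2 ⟨hx, h⟩) hxp))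
      hnzq0 hf₁nz
  · have hΓcover : ∀ x ∈ Γ, PVanish (lin w₁) x ∨ PVanish (lin w₂) x := by
      intro x hx
      have h0 : dot w₁ x.rep * dot w₂ x.rep = 0 := by
        rw [← hfac]
        exact hq₁v x hx x.rep x.rep_nonzero x.mk_rep
      rcases mul_eq_zero.1 h0 with h | h
      · exact Or.inl (by rw [pvanish_iff (lin_isHom w₁), eval_lin]; exact h)
      · exact Or.inr (by rw [pvanish_iff (lin_isHom w₂), eval_lin]; exact h)
    set B₁ := Γ.filter (fun x => ¬ PVanish (lin w₁) x) with hB₁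
    set B₂ := Γ.filter (fun x => ¬ PVanish (lin w₂) x) with hB₂
    by_cases hc₁ : B₁.Nonempty
    · by_cases hc₂ : B₂.Nonempty
      · exfalso
        have hcb₁ : SatisfiesCB (m - 3) B₁ := by
          have h' := residuation hcbΓ (lin_isHom w₁) (by omega : 1 ≤ m - 2)
          rwa [show m - 2 - 1 = m - 3 by omega] at h'
        have hcb₂ : SatisfiesCB (m - 3) B₂ := by
          have h' := residuation hcbΓ (lin_isHom w₂) (by omega : 1 ≤ m - 2)
          rwa [show m - 2 - 1 = m - 3 by omega] at h'
        have h₁ := card_lower hcb₁ hc₁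
        have h₂ := card_lower hcb₂ hc₂
        have hdisj : Disjoint B₁ B₂ := by
          rw [Finset.disjoint_left]
          intro x hx1 hx2
          rcases hΓcover x (Finset.mem_filter.1 hx1).1 with h | h
          · exact (Finset.mem_filter.1 hx1).2 h
          · exact (Finset.mem_filter.1 hx2).2 h
        have hsum : B₁.card + B₂.card ≤ Γ.card := by
          rw [← Finset.card_union_of_disjoint hdisj]
          exact Finset.card_le_card (Finset.union_subset
            (Finset.filter_subset _ _) (Finset.filter_subset _ _))
        omega
      · apply line_branch ih hCB hm3 hcard hw₂
        have hsub : Γ ⊆ S.filter (fun x => PVanish (lin w₂) x) := by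
          intro x hx
          refine Finset.mem_filter.2 ⟨(Finset.mem_filter.1 hx).1, ?_⟩
          by_contra h
          exact hc₂ ⟨x, Finset.mem_filter.2 ⟨hx, h⟩⟩
        calc m ≤ Γ.card := hn1
          _ ≤ _ := Finset.card_le_card hsub
    · apply line_branch ih hCB hm3 hcard hw₁
      have hsub : Γ ⊆ S.filter (fun x => PVanish (lin w₁) x) := by
        intro x hx
        refine Finset.mem_filter.2 ⟨(Finset.mem_filter.1 hx).1, ?_⟩
        by_contra h
        exact hc₁ ⟨x, Finset.mem_filter.2 ⟨hx, h⟩⟩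
      calc m ≤ Γ.card := hn1
        _ ≤ _ := Finset.card_le_card hsub

end CB

end

/-- A set of `r` points in the projective plane `ℙ^2`
satisfying the Cayley–Bacharach condition `CB(m)` with `r ≤ (5/2)·m + 1` lies on
a plane curve of degree at most 2: a line, a smooth conic, or a union of two
lines. -/
theorem cayleyBacharach_plane_points_on_degree_two_curve
    (m : ℕ) (S : Finset (PPt (Fin 3)))
    (hCB : SatisfiesCB m S)
    (hr : 2 * S.card ≤ 5 * m + 2) :
    (∃ L : Set (PPt (Fin 3)), IsLine L ∧ ↑S ⊆ L) ∨
    (∃ C : Set (PPt (Fin 3)), IsSmoothConic C ∧ ↑S ⊆ C) ∨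
    (∃ L₁ L₂ : Set (PPt (Fin 3)), IsLine L₁ ∧ IsLine L₂ ∧ ↑S ⊆ L₁ ∪ L₂) := by
  obtain ⟨q, hq2, hq0, hqv⟩ := CB.main_conic m S hCB hr
  exact CB.conic_to_goal hq2 hq0 hqv
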